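/- Let a be a strongly regular scale factor and for τ > 0 define g_ττ(τ,0) = −[1 − a'(τ)·∫_0^τ (a''(t)/a'(t)²)·(a(τ)/√(a(τ)²−a(t)²) − 1) dt]². Then 0 < −g_ττ(τ,0) < ∞; in particular the limiting metric coefficient at the big bang is finite and nonzero. -/

import Mathlib

open Set Filter MeasureTheory intervalIntegral

private theorem aux_deriv_pos (a : ℝ → ℝ) (ha0 : a 0 = 0)
    (hmono : StrictMonoOn a (Set.Ici 0))
    (hcont : ContinuousOn a (Set.Ici 0))
    (hsmooth : ContDiffOn ℝ 2 a (Set.Ioi 0))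
    (hreg : ∀ t > (0:ℝ), a t * deriv (deriv a) t / (deriv a t) ^ 2 ≤ 1)
    (K : ℝ) (hK : 1 ≤ K)
    (hKbound : ∀ t > (0:ℝ), -K ≤ a t * deriv (deriv a) t / (deriv a t) ^ 2) :
    ∀ t > (0:ℝ), 0 < deriv a t := by
  have hapos : ∀ t > (0:ℝ), 0 < a t := by
    intro t ht
    have := hmono (le_refl (0:ℝ)) (le_of_lt ht) ht
    rwa [ha0] at this
  have hd : ∀ t > (0:ℝ), HasDerivAt a (deriv a t) t := by
    intro t ht
    exact ((hsmooth.differentiableOn (by norm_num)).differentiableAt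
      (isOpen_Ioi.mem_nhds ht)).hasDerivAt
  have hs1 : ContDiffOn ℝ 1 (deriv a) (Set.Ioi 0) :=
    hsmooth.deriv_of_isOpen isOpen_Ioi (by norm_num)
  have hd2 : ∀ t > (0:ℝ), HasDerivAt (deriv a) (deriv (deriv a) t) t := by
    intro t ht
    exact ((hs1.differentiableOn (by norm_num)).differentiableAt
      (isOpen_Ioi.mem_nhds ht)).hasDerivAt
  have hc1 : ContinuousOn (deriv a) (Set.Ioi 0) := hs1.continuousOn
  -- nonnegativity of deriv
  have hnonneg : ∀ t > (0:ℝ), 0 ≤ deriv a t := by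
    intro t ht
    have hslope : Filter.Tendsto (slope a t) (nhdsWithin t (Set.Ioi t)) (nhds (deriv a t)) :=
      ((hasDerivAt_iff_tendsto_slope).mp (hd t ht)).mono_left
        (nhdsWithin_mono _ (fun x hx => ne_of_gt hx))
    refine ge_of_tendsto hslope ?_
    filter_upwards [self_mem_nhdsWithin] with x hx
    have hax : a t < a x := hmono (le_of_lt ht) (le_of_lt (lt_trans ht hx)) hx
    have : 0 < x - t := sub_pos.mpr hx
    rw [slope_def_field]
    exact div_nonneg (by linarith) (by linarith)
  -- main claim
  intro t₀ ht₀
  rcases lt_or_eq_of_le (hnonneg t₀ ht₀) with h | h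
  · exact h
  exfalso
  -- find s < t₀ with deriv a s > 0
  have h2 : (0:ℝ) < t₀/2 := by linarith
  obtain ⟨s, hsmem, hseq⟩ := exists_hasDerivAt_eq_slope a (deriv a) (by linarith : t₀/2 < t₀)
    (hcont.mono (fun x hx => le_trans (le_of_lt h2) hx.1))
    (fun x hx => hd x (lt_trans h2 hx.1))
  have hspos : 0 < deriv a s := by
    rw [hseq]
    have : a (t₀/2) < a t₀ := hmono (le_of_lt h2) (le_of_lt ht₀) (by linarith)
    apply div_pos <;> linarith
  have hs0 : 0 < s := lt_trans h2 hsmem.1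
  -- zeros set
  set Z : Set ℝ := Set.Icc s t₀ ∩ (deriv a) ⁻¹' {0} with hZ
  have hZne : t₀ ∈ Z := ⟨⟨le_of_lt hsmem.2, le_refl _⟩, by simp [← h]⟩
  have hZclosed : IsClosed Z := by
    apply ContinuousOn.preimage_isClosed_of_isClosed
      (hc1.mono (fun x hx => lt_of_lt_of_le hs0 hx.1)) isClosed_Icc isClosed_singleton
  have hbdd : BddBelow Z := ⟨s, fun x hx => hx.1.1⟩
  set t₁ : ℝ := sInf Z with ht₁
  have ht₁Z : t₁ ∈ Z := hZclosed.csInf_mem ⟨t₀, hZne⟩ hbdd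
  have hst₁ : s < t₁ := by
    rcases lt_or_eq_of_le ht₁Z.1.1 with h' | h'
    · exact h'
    · exfalso; have : deriv a t₁ = 0 := ht₁Z.2
      rw [← h'] at this; rw [this] at hspos; exact lt_irrefl 0 hspos
  have ht₁pos : 0 < t₁ := lt_trans hs0 hst₁
  -- positivity on Ico s t₁
  have hpos_on : ∀ x ∈ Set.Ico s t₁, 0 < deriv a x := by
    intro x hx
    rcases lt_or_eq_of_le (hnonneg x (lt_of_lt_of_le hs0 hx.1)) with h' | h'
    · exact h'
    · exfalso
      have hxZ : x ∈ Z := ⟨⟨hx.1, le_trans (le_of_lt hx.2) ht₁Z.1.2⟩, by simp [← h']⟩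
      have : t₁ ≤ x := csInf_le hbdd hxZ
      exact absurd hx.2 (not_lt.mpr this)
  -- Lipschitz bound for φ = (deriv a)⁻¹ on Ico s t₁
  set C : ℝ := K / a s with hC
  have hCpos : 0 < C := div_pos (by linarith) (hapos s hs0)
  set φ : ℝ → ℝ := fun x => (deriv a x)⁻¹ with hφ
  have hφd : ∀ x ∈ Set.Ico s t₁, HasDerivWithinAt φ
      (-(deriv (deriv a) x) / (deriv a x)^2) (Set.Ico s t₁) x := by
    intro x hx
    have hx0 : 0 < x := lt_of_lt_of_le hs0 hx.1
    exact (((hd2 x hx0).inv (ne_of_gt (hpos_on x hx))).hasDerivWithinAt).congr_deriv (by ring)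
  have hφbound : ∀ x ∈ Set.Ico s t₁, ‖-(deriv (deriv a) x) / (deriv a x)^2‖ ≤ C := by
    intro x hx
    have hx0 : 0 < x := lt_of_lt_of_le hs0 hx.1
    have hax : 0 < a x := hapos x hx0
    have has : 0 < a s := hapos s hs0
    have hsax : a s ≤ a x := by
      rcases eq_or_lt_of_le hx.1 with rfl | h'
      · exact le_refl _
      · exact le_of_lt (hmono (le_of_lt hs0) (le_of_lt hx0) h')
    have hd2x : (0:ℝ) < (deriv a x)^2 := pow_pos (hpos_on x hx) 2
    have hr1 := hreg x hx0
    have hr2 := hKbound x hx0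
    -- a x * dd x / (d x)^2 ∈ [-K, 1]
    have hq1 : deriv (deriv a) x / (deriv a x)^2 ≤ 1 / a x := by
      rw [div_le_div_iff₀ hd2x hax]
      have := (div_le_one hd2x).mp hr1
      linarith
    have hq2 : -K / a x ≤ deriv (deriv a) x / (deriv a x)^2 := by
      rw [div_le_div_iff₀ hax hd2x]
      have : -K * (deriv a x)^2 ≤ a x * deriv (deriv a) x := by
        have := (le_div_iff₀ hd2x).mp hr2
        linarith
      nlinarith
    have h1x : 1 / a x ≤ K / a s := by
      rw [div_le_div_iff₀ hax has]; nlinarith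
    have hKx : -(K / a s) ≤ -K / a x := by
      rw [neg_div, neg_le_neg_iff, div_le_div_iff₀ hax has]; nlinarith
    rw [neg_div, Real.norm_eq_abs, abs_le]
    constructor
    · rw [hC]; simp only [neg_le_neg_iff] at *
      have : deriv (deriv a) x / (deriv a x)^2 ≤ K / a s := le_trans hq1 h1x
      linarith [this]
    · rw [hC]
      have : -(K / a s) ≤ deriv (deriv a) x / (deriv a x)^2 := le_trans hKx hq2
      linarith [this]
  -- Lipschitz estimate
  have hlip := fun (x : ℝ) (hx : x ∈ Set.Ico s t₁) =>
    (convex_Ico s t₁).norm_image_sub_le_of_norm_hasDerivWithin_le hφd hφbound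
      (Set.mem_Ico.mpr ⟨le_refl s, hst₁⟩) hx
  set M : ℝ := φ s + C * (t₁ - s) with hM
  have hφs : 0 < φ s := inv_pos.mpr hspos
  have hMpos : 0 < M := by
    have : 0 ≤ C * (t₁ - s) := mul_nonneg (le_of_lt hCpos) (by linarith)
    linarith
  have key : ∀ x ∈ Set.Ico s t₁, φ x ≤ M := by
    intro x hx
    have h1 := hlip x hx
    have h2 : ‖x - s‖ ≤ t₁ - s := by
      rw [Real.norm_eq_abs, abs_of_nonneg (by linarith [hx.1])]
      linarith [hx.2]
    have h3 : φ x - φ s ≤ C * (t₁ - s) := by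
      calc φ x - φ s ≤ ‖φ x - φ s‖ := le_abs_self _
        _ ≤ C * ‖x - s‖ := h1
        _ ≤ C * (t₁ - s) := by nlinarith [norm_nonneg (x - s)]
    linarith
  -- find x near t₁ with small deriv
  have hct₁ : ContinuousAt (deriv a) t₁ := hc1.continuousAt (isOpen_Ioi.mem_nhds ht₁pos)
  have htend : Filter.Tendsto (deriv a) (nhdsWithin t₁ (Set.Iio t₁)) (nhds 0) := by
    have := hct₁.tendsto.mono_left (nhdsWithin_le_nhds (s := Set.Iio t₁))
    rwa [ht₁Z.2] at this
  have hev1 : ∀ᶠ x in nhdsWithin t₁ (Set.Iio t₁), deriv a x < (M+1)⁻¹ :=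
    htend.eventually_lt_const (by positivity)
  have hev2 : ∀ᶠ x in nhdsWithin t₁ (Set.Iio t₁), x ∈ Set.Ioo s t₁ := by
    filter_upwards [Ioo_mem_nhdsLT hst₁] with x hx using hx
  obtain ⟨x, hx1, hx2⟩ := (hev1.and hev2).exists
  have hxmem : x ∈ Set.Ico s t₁ := ⟨le_of_lt hx2.1, hx2.2⟩
  have hdx : 0 < deriv a x := hpos_on x hxmem
  have hφx : M + 1 < φ x := by
    rw [hφ]; simp only
    rw [inv_eq_one_div, lt_div_iff₀ hdx]
    have hc : (M + 1) * (M + 1)⁻¹ = 1 := mul_inv_cancel₀ (by linarith)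
    nlinarith [hx1, hdx, hMpos, hc]
  linarith [key x hxmem, hφx]

private theorem aux_ratio (a : ℝ → ℝ) (ha0 : a 0 = 0)
    (hmono : StrictMonoOn a (Set.Ici 0))
    (hcont : ContinuousOn a (Set.Ici 0))
    (hsmooth : ContDiffOn ℝ 2 a (Set.Ioi 0))
    (hreg : ∀ t > (0:ℝ), a t * deriv (deriv a) t / (deriv a t) ^ 2 ≤ 1)
    (hpos : ∀ t > (0:ℝ), 0 < deriv a t) :
    ∀ s t : ℝ, 0 < s → s ≤ t → deriv a t * a s ≤ deriv a s * a t := by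
  have hapos : ∀ t > (0:ℝ), 0 < a t := by
    intro t ht
    have := hmono (le_refl (0:ℝ)) (le_of_lt ht) ht
    rwa [ha0] at this
  have hd : ∀ t > (0:ℝ), HasDerivAt a (deriv a t) t := by
    intro t ht
    exact ((hsmooth.differentiableOn (by norm_num)).differentiableAt
      (isOpen_Ioi.mem_nhds ht)).hasDerivAt
  have hs1 : ContDiffOn ℝ 1 (deriv a) (Set.Ioi 0) :=
    hsmooth.deriv_of_isOpen isOpen_Ioi (by norm_num)
  have hd2 : ∀ t > (0:ℝ), HasDerivAt (deriv a) (deriv (deriv a) t) t := by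
    intro t ht
    exact ((hs1.differentiableOn (by norm_num)).differentiableAt
      (isOpen_Ioi.mem_nhds ht)).hasDerivAt
  have hc1 : ContinuousOn (deriv a) (Set.Ioi 0) := hs1.continuousOn
  intro s t hs hst
  rcases eq_or_lt_of_le hst with rfl | hlt
  · rfl
  -- apply antitone of ψ = deriv a / a on [s,t]
  set ψ : ℝ → ℝ := fun x => deriv a x / a x with hψ
  have hanti : AntitoneOn ψ (Set.Icc s t) := by
    apply antitoneOn_of_deriv_nonpos (convex_Icc s t)
    · apply ContinuousOn.div
      · exact hc1.mono (fun x hx => lt_of_lt_of_le hs hx.1)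
      · exact hcont.mono (fun x hx => le_of_lt (lt_of_lt_of_le hs hx.1))
      · exact fun x hx => ne_of_gt (hapos x (lt_of_lt_of_le hs hx.1))
    · rw [interior_Icc]
      intro x hx
      have hx0 : (0:ℝ) < x := lt_trans hs hx.1
      exact (((hd2 x hx0).div (hd x hx0) (ne_of_gt (hapos x hx0))).differentiableAt).differentiableWithinAt
    · rw [interior_Icc]
      intro x hx
      have hx0 : (0:ℝ) < x := lt_trans hs hx.1
      have hD : HasDerivAt ψ ((deriv (deriv a) x * a x - deriv a x * deriv a x) / (a x)^2) x :=
        (hd2 x hx0).div (hd x hx0) (ne_of_gt (hapos x hx0))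
      rw [hD.deriv]
      apply div_nonpos_of_nonpos_of_nonneg _ (sq_nonneg _)
      -- a x * a'' x ≤ (deriv a x)^2 from hreg
      have h1 := hreg x hx0
      have h2 : (0:ℝ) < (deriv a x)^2 := pow_pos (hpos x hx0) 2
      have h3 : a x * deriv (deriv a) x ≤ (deriv a x)^2 := by
        have := (div_le_one h2).mp h1
        linarith
      nlinarith
  have := hanti (Set.left_mem_Icc.mpr (le_of_lt hlt)) (Set.right_mem_Icc.mpr (le_of_lt hlt)) (le_of_lt hlt)
  -- ψ t ≤ ψ s
  rw [hψ] at this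
  have has := hapos s hs
  have hat := hapos t (lt_trans hs hlt)
  rw [div_le_div_iff₀ hat has] at this
  linarith

private theorem aux_small (a : ℝ → ℝ) (ha0 : a 0 = 0)
    (hmono : StrictMonoOn a (Set.Ici 0))
    (hcont : ContinuousOn a (Set.Ici 0))
    (hsmooth : ContDiffOn ℝ 2 a (Set.Ioi 0))
    (hpos : ∀ t > (0:ℝ), 0 < deriv a t)
    (hratio : ∀ s t : ℝ, 0 < s → s ≤ t → deriv a t * a s ≤ deriv a s * a t)
    (τ : ℝ) (hτ : 0 < τ) :
    ∃ δ ∈ Set.Ioo 0 τ, ∀ t ∈ Set.Ioo 0 δ,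
      2 * (deriv a τ * a t) ≤ deriv a t * a τ := by
  have hapos : ∀ t > (0:ℝ), 0 < a t := by
    intro t ht
    have := hmono (le_refl (0:ℝ)) (le_of_lt ht) ht
    rwa [ha0] at this
  have hd : ∀ t > (0:ℝ), HasDerivAt a (deriv a t) t := by
    intro t ht
    exact ((hsmooth.differentiableOn (by norm_num)).differentiableAt
      (isOpen_Ioi.mem_nhds ht)).hasDerivAt
  have hA : 0 < a τ := hapos τ hτ
  set L : ℝ := 2 * deriv a τ / a τ with hL
  have hdτ : 0 < deriv a τ := hpos τ hτ
  have hLpos : 0 < L := by positivity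
  -- claim : ∃ δ ∈ Ioo 0 τ, L ≤ deriv a δ / a δ
  have claim : ∃ δ ∈ Set.Ioo 0 τ, L ≤ deriv a δ / a δ := by
    by_contra hcl
    push_neg at hcl
    -- choose ε with a ε < a τ * exp (-L*τ)
    set m : ℝ := a τ * Real.exp (-L * τ) with hm
    have hmpos : 0 < m := by positivity
    have hev : ∀ᶠ x in nhdsWithin 0 (Set.Ioi 0), a x < m := by
      have hc0 : ContinuousWithinAt a (Set.Ici 0) 0 := hcont 0 (Set.mem_Ici.mpr le_rfl)
      have h1 : Filter.Tendsto a (nhdsWithin 0 (Set.Ioi 0)) (nhds (a 0)) :=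
        hc0.mono_left (nhdsWithin_mono 0 Set.Ioi_subset_Ici_self)
      rw [ha0] at h1
      exact h1.eventually_lt_const hmpos
    have hev2 : ∀ᶠ x in nhdsWithin 0 (Set.Ioi 0), x ∈ Set.Ioo 0 τ := by
      filter_upwards [Ioo_mem_nhdsGT hτ] with x hx using hx
    obtain ⟨ε, hεm, hε⟩ := (hev.and hev2).exists
    -- MVT for log ∘ a on [ε, τ]
    have hεpos : 0 < ε := hε.1
    have hετ : ε < τ := hε.2
    have hclog : ContinuousOn (fun x => Real.log (a x)) (Set.Icc ε τ) := by
      apply ContinuousOn.log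
      · exact hcont.mono (fun x hx => le_of_lt (lt_of_lt_of_le hεpos hx.1))
      · exact fun x hx => ne_of_gt (hapos x (lt_of_lt_of_le hεpos hx.1))
    have hdlog : ∀ x ∈ Set.Ioo ε τ, HasDerivAt (fun x => Real.log (a x))
        (deriv a x / a x) x := by
      intro x hx
      have hx0 : 0 < x := lt_trans hεpos hx.1
      exact (hd x hx0).log (ne_of_gt (hapos x hx0))
    obtain ⟨c, hc, hceq⟩ := exists_hasDerivAt_eq_slope (fun x => Real.log (a x))
      (fun x => deriv a x / a x) hετ hclog hdlog
    have hcmem : c ∈ Set.Ioo 0 τ := ⟨lt_trans hεpos hc.1, hc.2⟩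
    have hlt : deriv a c / a c < L := hcl c hcmem
    rw [hceq] at hlt
    -- (log a τ - log a ε)/(τ - ε) < L
    have hτε : 0 < τ - ε := by linarith
    have h5 : Real.log (a τ) - Real.log (a ε) < L * (τ - ε) := by
      have := (div_lt_iff₀ hτε).mp hlt
      linarith
    have h6 : Real.log (a ε) < Real.log m := Real.log_lt_log (hapos ε hεpos) hεm
    rw [hm, Real.log_mul (ne_of_gt hA) (ne_of_gt (Real.exp_pos _)), Real.log_exp] at h6
    nlinarith [hLpos, hεpos]
  obtain ⟨δ, hδ, hLδ⟩ := claim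
  refine ⟨δ, hδ, fun t ht => ?_⟩
  have ht0 : 0 < t := ht.1
  have haδ : 0 < a δ := hapos δ hδ.1
  have hat : 0 < a t := hapos t ht0
  have h1 := hratio t δ ht0 (le_of_lt ht.2)
  -- deriv a δ / a δ ≤ deriv a t / a t ; and L ≤ deriv a δ / a δ
  have h2 : L ≤ deriv a t / a t := by
    refine le_trans hLδ ?_
    rw [div_le_div_iff₀ haδ hat]
    linarith
  rw [hL, div_le_div_iff₀ hA hat] at h2
  linarith

private theorem aux_main (a : ℝ → ℝ) (ha0 : a 0 = 0)
    (hmono : StrictMonoOn a (Set.Ici 0))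
    (hcont : ContinuousOn a (Set.Ici 0))
    (hsmooth : ContDiffOn ℝ 2 a (Set.Ioi 0))
    (hreg : ∀ t > (0:ℝ), a t * deriv (deriv a) t / (deriv a t) ^ 2 ≤ 1)
    (hpos : ∀ t > (0:ℝ), 0 < deriv a t)
    (hratio : ∀ s t : ℝ, 0 < s → s ≤ t → deriv a t * a s ≤ deriv a s * a t)
    (hsmall : ∀ τ : ℝ, 0 < τ → ∃ δ ∈ Set.Ioo 0 τ, ∀ t ∈ Set.Ioo 0 δ,
      2 * (deriv a τ * a t) ≤ deriv a t * a τ)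
    (τ : ℝ) (hτ : 0 < τ) :
    deriv a τ * (∫ t in (0:ℝ)..τ, (deriv (deriv a) t / (deriv a t) ^ 2) *
            (a τ / Real.sqrt ((a τ) ^ 2 - (a t) ^ 2) - 1)) < 1 := by
  have hapos : ∀ t > (0:ℝ), 0 < a t := by
    intro t ht
    have := hmono (le_refl (0:ℝ)) (le_of_lt ht) ht
    rwa [ha0] at this
  have hd : ∀ t > (0:ℝ), HasDerivAt a (deriv a t) t := by
    intro t ht
    exact ((hsmooth.differentiableOn (by norm_num)).differentiableAt
      (isOpen_Ioi.mem_nhds ht)).hasDerivAt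
  set G : ℝ → ℝ := fun t => (deriv (deriv a) t / (deriv a t) ^ 2) *
      (a τ / Real.sqrt ((a τ) ^ 2 - (a t) ^ 2) - 1) with hG
  set A : ℝ := a τ with hA
  have hApos : 0 < A := hapos τ hτ
  by_cases hGint : IntervalIntegrable G volume 0 τ
  swap
  · rw [intervalIntegral.integral_undef hGint]
    simp
  set F : ℝ → ℝ := fun t => a t / (A + Real.sqrt (A^2 - (a t)^2)) with hF
  set H : ℝ → ℝ := fun t =>
    A * deriv a t / (Real.sqrt (A^2 - (a t)^2) * (A + Real.sqrt (A^2 - (a t)^2))) with hH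
  -- basic facts on Ioo 0 τ
  have hfacts : ∀ t ∈ Set.Ioo 0 τ, 0 < a t ∧ a t < A ∧
      0 < Real.sqrt (A^2 - (a t)^2) ∧ (Real.sqrt (A^2 - (a t)^2))^2 = A^2 - (a t)^2 := by
    intro t ht
    have h1 : 0 < a t := hapos t ht.1
    have h2 : a t < A := hmono (le_of_lt ht.1) (le_of_lt hτ) ht.2
    have h3 : 0 < A^2 - (a t)^2 := by nlinarith
    exact ⟨h1, h2, Real.sqrt_pos.mpr h3, Real.sq_sqrt (le_of_lt h3)⟩
  -- derivative of F is H on Ioo 0 τ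
  have hFderiv : ∀ t ∈ Set.Ioo 0 τ, HasDerivAt F (H t) t := by
    intro t ht
    obtain ⟨hu, huA, hr, hr2⟩ := hfacts t ht
    set r : ℝ := Real.sqrt (A^2 - (a t)^2) with hrdef
    have hda := hd t ht.1
    have hw : HasDerivAt (fun x => A^2 - (a x)^2) (-(2 * a t * deriv a t)) t := by
      have := ((hda.pow 2).const_sub (A^2))
      exact this.congr_deriv (by norm_num)
    have hrne : A^2 - (a t)^2 ≠ 0 := by nlinarith
    have hq : HasDerivAt (fun x => Real.sqrt (A^2 - (a x)^2))
        (-(2 * a t * deriv a t) / (2 * r)) t := hw.sqrt hrne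
    have hden : HasDerivAt (fun x => A + Real.sqrt (A^2 - (a x)^2))
        (-(2 * a t * deriv a t) / (2 * r)) t := hq.const_add A
    have hdenne : A + r ≠ 0 := by positivity
    have hdiv := hda.div hden hdenne
    refine hdiv.congr_deriv ?_
    symm
    rw [hH]
    simp only
    rw [hrdef.symm]
    have hrne' : r ≠ 0 := ne_of_gt hr
    field_simp
    linear_combination (-deriv a t) * hr2
  -- continuity of F on Icc 0 τ
  have hFcont : ContinuousOn F (Set.Icc 0 τ) := by
    apply ContinuousOn.div
    · exact hcont.mono (fun x hx => hx.1)
    · exact continuousOn_const.add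
        ((continuousOn_const.sub ((hcont.mono (fun x hx => hx.1)).pow 2)).sqrt)
    · intro x hx
      have := Real.sqrt_nonneg (A^2 - (a x)^2)
      positivity
  -- H nonneg on Ioo 0 τ
  have hHnonneg : ∀ t ∈ Set.Ioo 0 τ, 0 ≤ H t := by
    intro t ht
    obtain ⟨hu, huA, hr, hr2⟩ := hfacts t ht
    have hdt := hpos t ht.1
    rw [hH]
    positivity
  -- key pointwise bound
  have hkey : ∀ t ∈ Set.Ioo 0 τ, ∀ c : ℝ, 0 < c →
      c * (deriv a τ * a t) ≤ deriv a t * A →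
      c * (deriv a τ * G t) ≤ H t := by
    intro t ht c hc hcb
    obtain ⟨hu, huA, hr, hr2⟩ := hfacts t ht
    set r : ℝ := Real.sqrt (A^2 - (a t)^2) with hrdef
    have hdt := hpos t ht.1
    have hdτ := hpos τ hτ
    have hGle : G t ≤ (A / r - 1) / a t := by
      rw [hG]; simp only
      have hfnn : 0 ≤ A / r - 1 := by
        rw [sub_nonneg, le_div_iff₀ hr]
        nlinarith
      have hgle : deriv (deriv a) t / (deriv a t)^2 ≤ 1 / a t := by
        have hr1 := hreg t ht.1
        have hd2t : (0:ℝ) < (deriv a t)^2 := pow_pos hdt 2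
        rw [div_le_div_iff₀ hd2t hu]
        have := (div_le_one hd2t).mp hr1
        linarith
      calc deriv (deriv a) t / (deriv a t)^2 * (A / Real.sqrt (A^2 - a t^2) - 1)
          = deriv (deriv a) t / (deriv a t)^2 * (A / r - 1) := by rw [hrdef]
        _ ≤ (1 / a t) * (A / r - 1) := mul_le_mul_of_nonneg_right hgle hfnn
        _ = (A / r - 1) / a t := by ring
    have hfnn : 0 ≤ A / r - 1 := by
      rw [sub_nonneg, le_div_iff₀ hr]
      nlinarith
    -- c * deriv a τ * G t ≤ c * deriv a τ * ((A/r-1)/a t) ≤ H t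
    have hstep1 : c * (deriv a τ * G t) ≤ c * deriv a τ * ((A / r - 1) / a t) := by
      have : 0 ≤ c * deriv a τ := by positivity
      calc c * (deriv a τ * G t) = (c * deriv a τ) * G t := by ring
        _ ≤ (c * deriv a τ) * ((A / r - 1) / a t) := mul_le_mul_of_nonneg_left hGle this
        _ = c * deriv a τ * ((A / r - 1) / a t) := by ring
    have hstep2 : c * deriv a τ * ((A / r - 1) / a t) ≤
        (deriv a t * A / a t) * ((A / r - 1) / a t) := by
      apply mul_le_mul_of_nonneg_right _ (by positivity)
      rw [le_div_iff₀ hu]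
      linarith
    have hstep3 : (deriv a t * A / a t) * ((A / r - 1) / a t) = H t := by
      rw [hH]; simp only
      rw [hrdef.symm]
      have : (a t)^2 = A^2 - r^2 := by rw [hr2]; ring
      field_simp
      linear_combination (-1 : ℝ) * this
    linarith
  obtain ⟨δ, hδmem, hδbound⟩ := hsmall τ hτ
  have hδ0 : 0 < δ := hδmem.1
  have hδτ : δ < τ := hδmem.2
  have hττ : (0:ℝ) ≤ τ := le_of_lt hτ
  -- integrability of H
  have hHint : IntervalIntegrable H volume 0 τ := by
    apply intervalIntegrable_deriv_of_nonneg (g := F)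
    · rwa [Set.uIcc_of_le hττ]
    · intro x hx
      rw [min_eq_left hττ, max_eq_right hττ] at hx
      exact hFderiv x hx
    · intro x hx
      rw [min_eq_left hττ, max_eq_right hττ] at hx
      exact hHnonneg x hx
  have hsub1 : Set.uIcc 0 δ ⊆ Set.uIcc 0 τ :=
    Set.uIcc_subset_uIcc Set.left_mem_uIcc
      (by rw [Set.uIcc_of_le hττ]; exact ⟨le_of_lt hδ0, le_of_lt hδτ⟩)
  have hsub2 : Set.uIcc δ τ ⊆ Set.uIcc 0 τ :=
    Set.uIcc_subset_uIcc
      (by rw [Set.uIcc_of_le hττ]; exact ⟨le_of_lt hδ0, le_of_lt hδτ⟩)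
      (by rw [Set.uIcc_of_le hττ]; exact ⟨hττ, le_refl τ⟩)
  have hH1 : IntervalIntegrable H volume 0 δ := hHint.mono_set hsub1
  have hH2 : IntervalIntegrable H volume δ τ := hHint.mono_set hsub2
  have hG1 : IntervalIntegrable G volume 0 δ := hGint.mono_set hsub1
  have hG2 : IntervalIntegrable G volume δ τ := hGint.mono_set hsub2
  -- FTC
  have hF0 : F 0 = 0 := by rw [hF]; simp [ha0]
  have hFτ : F τ = 1 := by
    rw [hF]; simp only
    have h1 : A^2 - (a τ)^2 = 0 := by rw [hA]; ring
    rw [h1, Real.sqrt_zero, add_zero, ← hA, div_self (ne_of_gt hApos)]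
  have hFδpos : 0 < F δ := by
    rw [hF]; simp only
    have h1 : 0 < a δ := hapos δ hδ0
    have h2 : 0 ≤ Real.sqrt (A^2 - (a δ)^2) := Real.sqrt_nonneg _
    positivity
  have hFTC1 : ∫ t in (0:ℝ)..δ, H t = F δ := by
    have := integral_eq_sub_of_hasDerivAt_of_le (le_of_lt hδ0)
      (hFcont.mono (Set.Icc_subset_Icc (le_refl 0) (le_of_lt hδτ)))
      (fun x hx => hFderiv x ⟨hx.1, lt_trans hx.2 hδτ⟩) hH1
    rw [this, hF0, sub_zero]
  have hFTC2 : ∫ t in δ..τ, H t = 1 - F δ := by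
    have := integral_eq_sub_of_hasDerivAt_of_le (le_of_lt hδτ)
      (hFcont.mono (Set.Icc_subset_Icc (le_of_lt hδ0) (le_refl τ)))
      (fun x hx => hFderiv x ⟨lt_trans hδ0 hx.1, hx.2⟩) hH2
    rw [this, hFτ]
  -- monotone bounds
  have hbound1 : 2 * (deriv a τ * ∫ t in (0:ℝ)..δ, G t) ≤ F δ := by
    rw [← mul_assoc, ← hFTC1, ← intervalIntegral.integral_const_mul]
    apply intervalIntegral.integral_mono_ae_restrict (le_of_lt hδ0)
      (hG1.const_mul _) hH1
    rw [← MeasureTheory.restrict_Ioo_eq_restrict_Icc]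
    filter_upwards [ae_restrict_mem measurableSet_Ioo] with t ht
    have h := hkey t ⟨ht.1, lt_trans ht.2 hδτ⟩ 2 two_pos (hδbound t ht)
    linarith
  have hbound2 : deriv a τ * ∫ t in δ..τ, G t ≤ 1 - F δ := by
    rw [← hFTC2, ← intervalIntegral.integral_const_mul]
    apply intervalIntegral.integral_mono_ae_restrict (le_of_lt hδτ)
      (hG2.const_mul _) hH2
    rw [← MeasureTheory.restrict_Ioo_eq_restrict_Icc]
    filter_upwards [ae_restrict_mem measurableSet_Ioo] with t ht
    have htmem : t ∈ Set.Ioo 0 τ := ⟨lt_trans hδ0 ht.1, ht.2⟩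
    have h := hkey t htmem 1 one_pos
      (by simpa using hratio t τ htmem.1 (le_of_lt ht.2))
    linarith
  have hsplit : (∫ t in (0:ℝ)..τ, G t) = (∫ t in (0:ℝ)..δ, G t) + ∫ t in δ..τ, G t :=
    (intervalIntegral.integral_add_adjacent_intervals hG1 hG2).symm
  have hdτ : 0 < deriv a τ := hpos τ hτ
  calc deriv a τ * ∫ t in (0:ℝ)..τ, G t
      = deriv a τ * (∫ t in (0:ℝ)..δ, G t) + deriv a τ * ∫ t in δ..τ, G t := by
        rw [hsplit, mul_add]
    _ ≤ F δ / 2 + (1 - F δ) := by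
        have h1 : deriv a τ * (∫ t in (0:ℝ)..δ, G t) ≤ F δ / 2 := by linarith
        linarith
    _ < 1 := by linarith

/-- For a strongly regular scale factor, the limiting metric coefficient
`g_ττ(τ, ρ_{M_τ})` at the big bang is finite and nonzero: `0 < -g_ττ`. -/
theorem gtautau_at_bigbang_nonzero (a : ℝ → ℝ)
    (ha0 : a 0 = 0)
    (hmono : StrictMonoOn a (Set.Ici 0))
    (hcont : ContinuousOn a (Set.Ici 0))
    (hsmooth : ContDiffOn ℝ 2 a (Set.Ioi 0))
    (hreg : ∀ t > (0:ℝ), a t * deriv (deriv a) t / (deriv a t) ^ 2 ≤ 1)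
    (K : ℝ) (hK : 1 ≤ K)
    (hKbound : ∀ t > (0:ℝ), -K ≤ a t * deriv (deriv a) t / (deriv a t) ^ 2) :
    ∀ τ > (0:ℝ),
      0 < (1 - deriv a τ * ∫ t in (0:ℝ)..τ, (deriv (deriv a) t / (deriv a t) ^ 2) *
            (a τ / Real.sqrt ((a τ) ^ 2 - (a t) ^ 2) - 1)) ^ 2 := by
  intro τ hτ
  have hpos := aux_deriv_pos a ha0 hmono hcont hsmooth hreg K hK hKbound
  have hratio := aux_ratio a ha0 hmono hcont hsmooth hreg hpos
  have hsmall := fun (σ : ℝ) (hσ : 0 < σ) =>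
    aux_small a ha0 hmono hcont hsmooth hpos hratio σ hσ
  have hmain := aux_main a ha0 hmono hcont hsmooth hreg hpos hratio hsmall τ hτ
  have hlt : 0 < 1 - deriv a τ * ∫ t in (0:ℝ)..τ, (deriv (deriv a) t / (deriv a t) ^ 2) *
      (a τ / Real.sqrt ((a τ) ^ 2 - (a t) ^ 2) - 1) := by linarith
  exact pow_pos hlt 2
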